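/- Define f̂(s) = s·e^{-1/s²} for s ≠ 0, f̂(0) = 0, and let F̂(s) = ∫₀^s f̂(t) dt. Fix R > 0 and let κ satisfy 2 < κ < 2 + 2/R². Then for all s with |s| ≤ R, one has s·f̂(s) − κ·F̂(s) ≥ 0. -/

import Mathlib

theorem stmt_4 (f F : ℝ → ℝ)
    (hf : ∀ s : ℝ, s ≠ 0 → f s = s * Real.exp (-(1 / s ^ 2)))
    (hf0 : f 0 = 0)
    (hF : ∀ s : ℝ, F s = ∫ t in (0:ℝ)..s, f t)
    (R κ : ℝ) (hR : 0 < R) (hκ₁ : 2 < κ) (hκ₂ : κ < 2 + 2 / R ^ 2) :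
    ∀ s : ℝ, |s| ≤ R → 0 ≤ s * f s - κ * F s := by
  -- continuity of f
  have hfc : Continuous f := by
    rw [continuous_iff_continuousAt]
    intro x
    rcases eq_or_ne x 0 with rfl | hx
    · rw [ContinuousAt, hf0]
      refine squeeze_zero_norm ?_ (continuous_abs.tendsto' 0 0 abs_zero)
      · intro s
        rcases eq_or_ne s 0 with rfl | hs
        · simp [hf0]
        · rw [hf s hs, Real.norm_eq_abs, abs_mul]
          have h1 : Real.exp (-(1 / s ^ 2)) ≤ 1 := by
            rw [Real.exp_le_one_iff, neg_nonpos]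
            positivity
          have h2 : 0 ≤ Real.exp (-(1 / s ^ 2)) := (Real.exp_pos _).le
          calc |s| * |Real.exp (-(1 / s ^ 2))| ≤ |s| * 1 := by
                rw [abs_of_nonneg h2]; exact mul_le_mul_of_nonneg_left h1 (abs_nonneg s)
            _ = |s| := mul_one _
    · have : ContinuousAt (fun s => s * Real.exp (-(1 / s ^ 2))) x := by
        fun_prop (disch := positivity)
      apply this.congr
      filter_upwards [isOpen_ne.mem_nhds hx] with s hs
      exact (hf s hs).symm
  -- F has derivative f
  have hFd : ∀ s : ℝ, HasDerivAt F (f s) s := by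
    intro s
    have : HasDerivAt (fun u => ∫ t in (0:ℝ)..u, f t) (f s) s :=
      intervalIntegral.integral_hasDerivAt_right
        (hfc.intervalIntegrable 0 s)
        (hfc.stronglyMeasurableAtFilter _ _) hfc.continuousAt
    exact this.congr_of_eventuallyEq (Filter.Eventually.of_forall fun u => hF u)
  set g : ℝ → ℝ := fun s => s * f s - κ * F s with hg
  have hFc : Continuous F := continuous_iff_continuousAt.mpr fun s => (hFd s).continuousAt
  have hgc : Continuous g := (continuous_id.mul hfc).sub (continuous_const.mul hFc)
  have hg0 : g 0 = 0 := by simp [hg, hf0, hF 0]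
  -- derivative at s ≠ 0
  have hgd : ∀ s : ℝ, s ≠ 0 →
      HasDerivAt g (s * Real.exp (-(1 / s ^ 2)) * (2 + 2 / s ^ 2 - κ)) s := by
    intro s hs
    have h1 : HasDerivAt (fun u : ℝ => u ^ 2 * Real.exp (-(1 / u ^ 2)) - κ * F u)
        (s * Real.exp (-(1 / s ^ 2)) * (2 + 2 / s ^ 2 - κ)) s := by
      have hinner : HasDerivAt (fun u : ℝ => -(1 / u ^ 2)) (2 / s ^ 3) s := by
        have : HasDerivAt (fun u : ℝ => u ^ 2) (2 * s) s := by
          simpa using (hasDerivAt_pow 2 s)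
        have h := ((hasDerivAt_const s (1:ℝ)).div this (by positivity)).neg
        convert h using 1
        · rfl
        · rfl
        · rfl
        field_simp
        ring
      have hexp : HasDerivAt (fun u : ℝ => Real.exp (-(1 / u ^ 2)))
          (Real.exp (-(1 / s ^ 2)) * (2 / s ^ 3)) s := (Real.hasDerivAt_exp _).comp s hinner
      have hsq : HasDerivAt (fun u : ℝ => u ^ 2) (2 * s) s := by
        simpa using (hasDerivAt_pow 2 s)
      have := (hsq.mul hexp).sub ((hFd s).const_mul κ)
      convert this using 1
      · rfl
      · rfl
      · rfl
      rw [hf s hs]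
      field_simp
    apply h1.congr_of_eventuallyEq
    filter_upwards [isOpen_ne.mem_nhds hs] with u hu
    rw [hg]
    simp only
    rw [hf u hu]
    ring
  have key : ∀ s ∈ Set.Ioo (-R) R, s ≠ 0 →
      deriv g s = s * Real.exp (-(1 / s ^ 2)) * (2 + 2 / s ^ 2 - κ) := fun s _ hs =>
    (hgd s hs).deriv
  have hfactor : ∀ s : ℝ, s ≠ 0 → |s| ≤ R → 0 < 2 + 2 / s ^ 2 - κ := by
    intro s hs hsR
    have h1 : s ^ 2 ≤ R ^ 2 := by
      have := sq_abs s ▸ pow_le_pow_left₀ (abs_nonneg s) hsR 2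
      simpa [sq_abs] using this
    have h2 : 2 / R ^ 2 ≤ 2 / s ^ 2 :=
      div_le_div_of_nonneg_left (by norm_num) (by positivity) h1
    linarith
  intro s hsR
  rcases lt_trichotomy s 0 with hs | rfl | hs
  · -- antitone on [-R, 0]
    have hA : AntitoneOn g (Set.Icc (-R) 0) := by
      apply antitoneOn_of_deriv_nonpos (convex_Icc _ _) hgc.continuousOn
      · intro x hx
        rw [interior_Icc] at hx
        exact (hgd x (ne_of_lt hx.2)).differentiableAt.differentiableWithinAt
      · intro x hx
        rw [interior_Icc] at hx
        have hx0 : x ≠ 0 := ne_of_lt hx.2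
        rw [(hgd x hx0).deriv]
        have hxR : |x| ≤ R := by
          rw [abs_le]; constructor <;> [exact hx.1.le; linarith [hx.2]]
        have hfac := hfactor x hx0 hxR
        exact mul_nonpos_of_nonpos_of_nonneg
          (mul_nonpos_of_nonpos_of_nonneg hx.2.le (Real.exp_pos _).le) hfac.le
    have hmem : s ∈ Set.Icc (-R) 0 := ⟨by rw [abs_le] at hsR; exact hsR.1, hs.le⟩
    have := hA hmem ⟨by linarith, le_refl 0⟩ hs.le
    rw [hg0] at this
    simpa [hg] using this
  · simp [hf0, hF 0]
  · -- monotone on [0, R]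
    have hM : MonotoneOn g (Set.Icc 0 R) := by
      apply monotoneOn_of_deriv_nonneg (convex_Icc _ _) hgc.continuousOn
      · intro x hx
        rw [interior_Icc] at hx
        exact (hgd x (ne_of_gt hx.1)).differentiableAt.differentiableWithinAt
      · intro x hx
        rw [interior_Icc] at hx
        have hx0 : x ≠ 0 := ne_of_gt hx.1
        rw [(hgd x hx0).deriv]
        have hxR : |x| ≤ R := by
          rw [abs_le]; constructor <;> [linarith [hx.1]; exact hx.2.le]
        have hfac := hfactor x hx0 hxR
        exact (mul_pos (mul_pos hx.1 (Real.exp_pos _)) hfac).le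
    have hmem : s ∈ Set.Icc 0 R := ⟨hs.le, by rw [abs_le] at hsR; exact hsR.2⟩
    have := hM ⟨le_refl 0, hR.le⟩ hmem hs.le
    rw [hg0] at this
    simpa [hg] using this
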